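/- For every k ∈ N₂, the vector r^k does not lie in recc(S_k^C); that is, k ∉ J where J := {i ∈ N : r^i ∈ recc(S_k^C)}. -/

import Mathlib

open Set Pointwise

noncomputable section

variable {n : ℕ} {ι : Type*} [Fintype ι]

/-- Recession cone of a set `A`. -/
def recc (A : Set (Fin n → ℝ)) : Set (Fin n → ℝ) :=
  {d | ∀ a ∈ A, ∀ t : ℝ, 0 ≤ t → a + t • d ∈ A}

/-- The translated simplicial cone `P^B = {x̄ + Σ_j x_j r^j : x_j ≥ 0}`. -/
def PBset (xb : Fin n → ℝ) (r : ι → Fin n → ℝ) : Set (Fin n → ℝ) :=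
  {x | ∃ c : ι → ℝ, (∀ j, 0 ≤ c j) ∧ x = xb + ∑ j, c j • r j}

/-- The recession cone of `P^B`, i.e. `{Σ_j t_j r^j : t_j ≥ 0}`. -/
def reccPBset (r : ι → Fin n → ℝ) : Set (Fin n → ℝ) :=
  {x | ∃ t : ι → ℝ, (∀ j, 0 ≤ t j) ∧ x = ∑ j, t j • r j}

/-- `λ⁻ = inf {λ ≥ 0 : x̄ + λ d ∈ C}` (`+∞` if the halfline misses `C`). -/
noncomputable def lamM (xb d : Fin n → ℝ) (C : Set (Fin n → ℝ)) : EReal :=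
  sInf ((fun l : ℝ => (l : EReal)) '' {l : ℝ | 0 ≤ l ∧ xb + l • d ∈ C})

/-- `λ⁺ = sup {λ ≥ 0 : x̄ + λ d ∈ C}` (`−∞` if the halfline misses `C`). -/
noncomputable def lamP (xb d : Fin n → ℝ) (C : Set (Fin n → ℝ)) : EReal :=
  sSup ((fun l : ℝ => (l : EReal)) '' {l : ℝ | 0 ≤ l ∧ xb + l • d ∈ C})

/-- `N₀`: indices whose halfline misses `C`. -/
def N0set (xb : Fin n → ℝ) (r : ι → Fin n → ℝ) (C : Set (Fin n → ℝ)) : Set ι :=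
  {j | ∀ l : ℝ, 0 ≤ l → xb + l • r j ∉ C}

/-- `N₁`: indices with `0 < λ⁻ < +∞` and `λ⁺ = +∞`. -/
def N1set (xb : Fin n → ℝ) (r : ι → Fin n → ℝ) (C : Set (Fin n → ℝ)) : Set ι :=
  {j | 0 < lamM xb (r j) C ∧ lamM xb (r j) C < ⊤ ∧ lamP xb (r j) C = ⊤}

/-- `N₂`: indices with `0 < λ⁻ < +∞` and `λ⁻ < λ⁺ < +∞`. -/
def N2set (xb : Fin n → ℝ) (r : ι → Fin n → ℝ) (C : Set (Fin n → ℝ)) : Set ι :=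
  {j | 0 < lamM xb (r j) C ∧ lamM xb (r j) C < ⊤ ∧
    lamM xb (r j) C < lamP xb (r j) C ∧ lamP xb (r j) C < ⊤}

/-- `S_k^C = {x̄} + conv(⋃_{j∈N₂} {λ r^j : 0 ≤ λ < λ⁺_j}) + {λ r^k : λ ≤ 0} + recc(C)`. -/
def SkCset (xb : Fin n → ℝ) (r : ι → Fin n → ℝ) (C : Set (Fin n → ℝ)) (k : ι) :
    Set (Fin n → ℝ) :=
  {xb} + convexHull ℝ (⋃ j ∈ N2set xb r C,
      {y : Fin n → ℝ | ∃ l : ℝ, 0 ≤ l ∧ (l : EReal) < lamP xb (r j) C ∧ y = l • r j})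
    + {y : Fin n → ℝ | ∃ l : ℝ, l ≤ 0 ∧ y = l • r k}
    + recc C

lemma exists_coord [DecidableEq ι] {V : Type*} [AddCommGroup V] [Module ℝ V]
    (r : ι → V) (hr : LinearIndependent ℝ r) :
    ∃ f : ι → (V →ₗ[ℝ] ℝ), ∀ j i, f j (r i) = if i = j then 1 else 0 := by
  have := fun j => LinearMap.exists_extend ((Module.Basis.span hr).coord j)
  choose f hf using this
  refine ⟨f, fun j i => ?_⟩
  have : r i ∈ Submodule.span ℝ (Set.range r) := Submodule.subset_span ⟨i, rfl⟩
  have h1 : f j (r i) = (Module.Basis.span hr).coord j ⟨r i, this⟩ := by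
    rw [← hf j]; rfl
  rw [h1]
  have h2 : (⟨r i, this⟩ : Submodule.span ℝ (Set.range r)) = Module.Basis.span hr i := by
    ext; simp [Module.Basis.span_apply]
  rw [h2, Module.Basis.coord_apply, Module.Basis.repr_self, Finsupp.single_apply]

lemma recc_smul {C : Set (Fin n → ℝ)} {d : Fin n → ℝ} (hd : d ∈ recc C) {s : ℝ}
    (hs : 0 ≤ s) : s • d ∈ recc C := by
  intro a ha t ht
  have := hd a ha (t * s) (mul_nonneg ht hs)
  simpa [smul_smul] using this

/-- Proposition 7. For `k ∈ N₂`, `r^k ∉ recc(S_k^C)`, i.e. `k ∉ J`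
where `J = {i : r^i ∈ recc(S_k^C)}`. -/
theorem stmt14 (xb : Fin n → ℝ) (r : ι → Fin n → ℝ) (hr : LinearIndependent ℝ r)
    (C : Set (Fin n → ℝ)) (hCopen : IsOpen C) (hCconv : Convex ℝ C)
    (hxb : xb ∉ closure C) (hrecc : recc C ⊆ reccPBset r)
    (k : ι) (hk : k ∈ N2set xb r C) :
    r k ∉ recc (SkCset xb r C k) := by
  classical
  intro hrk
  obtain ⟨f, hf⟩ := exists_coord r hr
  obtain ⟨hM0, hMt, hMP, hPt⟩ := hk
  -- L : real value of lamP k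
  have hqb : lamP xb (r k) C ≠ ⊥ := by
    intro h
    exact absurd (hMP.trans_eq h) (by simp)
  obtain ⟨L, hLq⟩ : ∃ L : ℝ, lamP xb (r k) C = (L : EReal) :=
    ⟨(lamP xb (r k) C).toReal, (EReal.coe_toReal hPt.ne hqb).symm⟩
  have hL0 : 0 < L := by
    have : (0 : EReal) < (L : EReal) := by
      rw [← hLq]; exact lt_trans hM0 hMP
    exact_mod_cast this
  -- the halfline meets C
  have hne : ∃ l : ℝ, 0 ≤ l ∧ xb + l • r k ∈ C := by
    by_contra h
    push_neg at h
    have hempty : {l : ℝ | 0 ≤ l ∧ xb + l • r k ∈ C} = ∅ := by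
      ext l; simp only [mem_setOf_eq, mem_empty_iff_false, iff_false]
      rintro ⟨h1, h2⟩; exact h l h1 h2
    have : lamM xb (r k) C = ⊤ := by
      rw [lamM, hempty, image_empty, sInf_empty]
    exact absurd (this ▸ hMt) (lt_irrefl _)
  -- r k is not a recession direction of C
  have hrkC : r k ∉ recc C := by
    intro hrc
    obtain ⟨l0, hl0, hl0C⟩ := hne
    have hmem : xb + (l0 + (L + 1)) • r k ∈ C := by
      have := hrc (xb + l0 • r k) hl0C (L + 1) (by linarith)
      have e : xb + l0 • r k + (L + 1) • r k = xb + (l0 + (L + 1)) • r k := by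
        module
      rwa [e] at this
    have hle : ((l0 + (L + 1) : ℝ) : EReal) ≤ lamP xb (r k) C :=
      le_sSup ⟨l0 + (L + 1), ⟨by linarith, hmem⟩, rfl⟩
    rw [hLq] at hle
    have : l0 + (L + 1) ≤ L := by exact_mod_cast hle
    linarith
  -- xb ∈ S
  have h0conv : (0 : Fin n → ℝ) ∈ convexHull ℝ (⋃ j ∈ N2set xb r C,
      {y : Fin n → ℝ | ∃ l : ℝ, 0 ≤ l ∧ (l : EReal) < lamP xb (r j) C ∧ y = l • r j}) := by
    apply subset_convexHull
    refine mem_iUnion₂.mpr ⟨k, ⟨hM0, hMt, hMP, hPt⟩, 0, le_refl _, ?_, by simp⟩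
    rw [hLq]; exact_mod_cast hL0
  have h0rec : (0 : Fin n → ℝ) ∈ recc C := by
    intro a ha t ht; simpa using ha
  have hxbS : xb ∈ SkCset xb r C k := by
    refine ⟨xb + 0 + 0, ⟨xb + 0, ⟨xb, rfl, 0, h0conv, rfl⟩, 0, ⟨0, le_refl _, by simp⟩, rfl⟩,
      0, h0rec, by simp⟩
  -- coordinate bounds on the convex hull part
  have hconvK : ∀ v ∈ convexHull ℝ (⋃ j ∈ N2set xb r C,
      {y : Fin n → ℝ | ∃ l : ℝ, 0 ≤ l ∧ (l : EReal) < lamP xb (r j) C ∧ y = l • r j}),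
      (∀ j, 0 ≤ f j v) ∧ f k v < L := by
    intro v hv
    have hsub : (⋃ j ∈ N2set xb r C,
        {y : Fin n → ℝ | ∃ l : ℝ, 0 ≤ l ∧ (l : EReal) < lamP xb (r j) C ∧ y = l • r j}) ⊆
        {y | (∀ j, 0 ≤ f j y) ∧ f k y < L} := by
      rintro y hy
      obtain ⟨j, hj, l, hl0, hlP, rfl⟩ := by
        simpa only [mem_iUnion₂, mem_setOf_eq] using hy
      constructor
      · intro i
        rw [map_smul, hf i j, smul_eq_mul]
        by_cases h : j = i <;> simp [h, hl0]
      · rw [map_smul, hf k j, smul_eq_mul]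
        by_cases h : j = k
        · subst h
          rw [hLq] at hlP
          have : l < L := by exact_mod_cast hlP
          simpa using this
        · simp [h, hL0]
    have hcvx : Convex ℝ {y : Fin n → ℝ | (∀ j, 0 ≤ f j y) ∧ f k y < L} := by
      intro a ha b hb s t hs ht hst
      constructor
      · intro j
        rw [map_add, map_smul, map_smul]
        exact add_nonneg (smul_nonneg hs (ha.1 j)) (smul_nonneg ht (hb.1 j))
      · rw [map_add, map_smul, map_smul, smul_eq_mul, smul_eq_mul]
        rcases eq_or_lt_of_le hs with h | h
        · rw [← h] at hst ⊢
          simp only [zero_mul, zero_add] at *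
          rw [hst, one_mul]; exact hb.2
        · calc s * f k a + t * f k b < s * L + t * L := by
                apply add_lt_add_of_lt_of_le
                · exact (mul_lt_mul_iff_right₀ h).mpr ha.2
                · exact mul_le_mul_of_nonneg_left hb.2.le ht
              _ = L := by rw [← add_mul, hst, one_mul]
    exact convexHull_min hsub hcvx hv
  -- coordinates of elements of reccPBset
  have hcoordSum : ∀ (t : ι → ℝ) (i : ι), f i (∑ j, t j • r j) = t i := by
    intro t i
    rw [map_sum]
    rw [Finset.sum_eq_single i]
    · rw [map_smul, hf i i, smul_eq_mul]; simp
    · intro j _ hj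
      rw [map_smul, hf i j, smul_eq_mul]; simp [hj]
    · intro h; exact absurd (Finset.mem_univ i) h
  -- key bound : any point xb + t • r k in S has t < L
  have key : ∀ t : ℝ, xb + t • r k ∈ SkCset xb r C k → t < L := by
    intro t ht
    obtain ⟨w, hw, d, hd, hsum⟩ := ht
    obtain ⟨u, hu, m, hm, h2⟩ := hw
    obtain ⟨xb', hxb', v, hv, h3⟩ := hu
    rw [mem_singleton_iff] at hxb'
    obtain ⟨μ, hμ, hmeq⟩ := hm
    obtain ⟨tt, htt, hdeq⟩ := hrecc hd
    obtain ⟨hvnn, hvk⟩ := hconvK v hv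
    have h3' : xb' + v = u := h3
    have h2' : u + m = w := h2
    have hsum' : w + d = xb + t • r k := hsum
    -- main equation
    have heq : t • r k = v + μ • r k + d := by
      have e : xb + (v + μ • r k + d) = xb + t • r k := by
        rw [← hsum', ← h2', ← h3', hxb', hmeq]; abel
      exact (add_left_cancel e).symm
    -- coordinates of d
    have hfd : ∀ i, f i d = tt i := by
      intro i; rw [hdeq]; exact hcoordSum tt i
    -- for j ≠ k, tt j = 0 and f j v = 0
    have hj0 : ∀ j, j ≠ k → tt j = 0 := by
      intro j hj
      have := congrArg (f j) heq
      rw [map_smul, map_add, map_add, map_smul, hf j k, hfd j] at this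
      simp only [if_neg (Ne.symm hj), smul_zero] at this
      have h0 : 0 = f j v + tt j := by simpa using this
      have := hvnn j
      have := htt j
      linarith
    -- hence d = tt k • r k
    have hd' : d = tt k • r k := by
      rw [hdeq]
      rw [Finset.sum_eq_single k]
      · intro j _ hj; rw [hj0 j hj, zero_smul]
      · intro h; exact absurd (Finset.mem_univ k) h
    -- tt k = 0, else r k ∈ recc C
    have httk : tt k = 0 := by
      by_contra h
      have hpos : 0 < tt k := lt_of_le_of_ne (htt k) (Ne.symm h)
      have : r k ∈ recc C := by
        have := recc_smul (hd' ▸ hd) (le_of_lt (inv_pos.mpr hpos))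
        rwa [smul_smul, inv_mul_cancel₀ (ne_of_gt hpos), one_smul] at this
      exact hrkC this
    -- apply f k to equation
    have hfk := congrArg (f k) heq
    rw [map_smul, map_add, map_add, map_smul, hf k k, hfd k, httk] at hfk
    simp at hfk
    linarith
  -- conclude
  have := hrk xb hxbS L hL0.le
  exact absurd (key L this) (lt_irrefl L)
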